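/- For every t with 0 < t < 1 and every r with 1/2 ≤ r ≤ 1, the function z ↦ 2^{t·z} · ν(z, r) is Lebesgue integrable on ℝ; in particular the quantity φ(t, r) = ∫_{ℝ} 2^{t·z} ν(z, r) dz is finite. -/

import Mathlib

open MeasureTheory

/-- The density `ν(z, r)` of the highest position of an F-PCSA subsketch:
`ν(z, r) = (1 − e^{−2^{−z}}) r ∏_{j=1}^∞ (1 − (1 − e^{−2^{−z−j}}) r)`. -/
noncomputable def nu (z r : ℝ) : ℝ :=
  (1 - Real.exp (-(2:ℝ) ^ (-z))) * r *
    ∏' j : ℕ, (1 - (1 - Real.exp (-(2:ℝ) ^ (-z - ((j : ℝ) + 1)))) * r)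

namespace Stmt5Aux

open Real Filter

noncomputable def cfac (r z : ℝ) (j : ℕ) : ℝ :=
  1 - (1 - Real.exp (-(2:ℝ) ^ (-z - ((j : ℝ) + 1)))) * r

lemma exp_le_cfac {r : ℝ} (hr0 : 0 ≤ r) (hr1 : r ≤ 1) (z : ℝ) (j : ℕ) :
    Real.exp (-(2:ℝ) ^ (-z - ((j : ℝ) + 1))) ≤ cfac r z j := by
  unfold cfac
  have h1 : Real.exp (-(2:ℝ) ^ (-z - ((j : ℝ) + 1))) ≤ 1 :=
    Real.exp_le_one_iff.mpr (neg_nonpos.mpr (Real.rpow_nonneg (by norm_num) _))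
  nlinarith

lemma cfac_pos {r : ℝ} (hr0 : 0 ≤ r) (hr1 : r ≤ 1) (z : ℝ) (j : ℕ) :
    0 < cfac r z j :=
  lt_of_lt_of_le (Real.exp_pos _) (exp_le_cfac hr0 hr1 z j)

lemma cfac_le_one {r : ℝ} (hr0 : 0 ≤ r) (z : ℝ) (j : ℕ) : cfac r z j ≤ 1 := by
  unfold cfac
  have h1 : Real.exp (-(2:ℝ) ^ (-z - ((j : ℝ) + 1))) ≤ 1 :=
    Real.exp_le_one_iff.mpr (neg_nonpos.mpr (Real.rpow_nonneg (by norm_num) _))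
  nlinarith

lemma summable_pow (z : ℝ) : Summable (fun j : ℕ => (2:ℝ) ^ (-z - ((j : ℝ) + 1))) := by
  have : ∀ j : ℕ, (2:ℝ) ^ (-z - ((j : ℝ) + 1)) = (2:ℝ) ^ (-z - 1) * (1/2 : ℝ) ^ j := by
    intro j
    rw [show -z - ((j:ℝ)+1) = (-z - 1) + (-(j:ℝ)) by ring, Real.rpow_add two_pos,
      Real.rpow_neg (by norm_num), Real.rpow_natCast]
    rw [one_div, inv_pow]
  simp_rw [this]
  exact (summable_geometric_of_lt_one (by norm_num) (by norm_num)).mul_left _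

lemma summable_log {r : ℝ} (hr0 : 0 ≤ r) (hr1 : r ≤ 1) (z : ℝ) :
    Summable (fun j : ℕ => Real.log (cfac r z j)) := by
  apply Summable.of_abs
  apply Summable.of_nonneg_of_le (fun j => abs_nonneg _) _ (summable_pow z)
  intro j
  have hpos := cfac_pos hr0 hr1 z j
  have hle : Real.log (cfac r z j) ≤ 0 := Real.log_nonpos hpos.le (cfac_le_one hr0 z j)
  rw [abs_of_nonpos hle, neg_le]
  calc -(2:ℝ) ^ (-z - ((j : ℝ) + 1))
      = Real.log (Real.exp (-(2:ℝ) ^ (-z - ((j : ℝ) + 1)))) := (Real.log_exp _).symm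
    _ ≤ Real.log (cfac r z j) := Real.log_le_log (Real.exp_pos _) (exp_le_cfac hr0 hr1 z j)

lemma tprod_eq {r : ℝ} (hr0 : 0 ≤ r) (hr1 : r ≤ 1) :
    (Real.exp ∘ fun z : ℝ => ∑' j : ℕ, Real.log (cfac r z j)) =
      fun z : ℝ => ∏' j : ℕ, cfac r z j :=
  funext fun z => Real.rexp_tsum_eq_tprod (fun j => cfac_pos hr0 hr1 z j)
    (summable_log hr0 hr1 z)

lemma tprod_pos {r : ℝ} (hr0 : 0 ≤ r) (hr1 : r ≤ 1) (z : ℝ) :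
    0 < ∏' j : ℕ, cfac r z j := by
  rw [← congrFun (tprod_eq hr0 hr1) z]
  exact Real.exp_pos _

lemma tprod_le_one' {r : ℝ} (hr0 : 0 ≤ r) (hr1 : r ≤ 1) (z : ℝ) :
    ∏' j : ℕ, cfac r z j ≤ 1 := by
  rw [← congrFun (tprod_eq hr0 hr1) z]
  simp only [Function.comp_apply]
  rw [Real.exp_le_one_iff]
  exact tsum_nonpos (fun j => Real.log_nonpos (cfac_pos hr0 hr1 z j).le (cfac_le_one hr0 z j))

lemma measurable_tprod {r : ℝ} (hr0 : 0 ≤ r) (hr1 : r ≤ 1) :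
    Measurable (fun z : ℝ => ∏' j : ℕ, cfac r z j) := by
  rw [← tprod_eq hr0 hr1]
  apply Real.measurable_exp.comp
  have hcont : ∀ j : ℕ, Continuous (fun z : ℝ => Real.log (cfac r z j)) := by
    intro j
    apply Continuous.log
    · unfold cfac
      have : Continuous fun z : ℝ => (2:ℝ) ^ (-z - ((j : ℝ) + 1)) := by
        simp_rw [Real.rpow_def_of_pos (by norm_num : (0:ℝ) < 2)]
        exact Real.continuous_exp.comp (continuous_const.mul (by continuity))
      continuity
    · exact fun z => (cfac_pos hr0 hr1 z j).ne'
  apply measurable_of_tendsto_metrizable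
    (f := fun n (z : ℝ) => ∑ j ∈ Finset.range n, Real.log (cfac r z j))
  · intro n
    exact (continuous_finset_sum _ (fun j _ => hcont j)).measurable
  · rw [tendsto_pi_nhds]
    intro z
    exact (summable_log hr0 hr1 z).hasSum.tendsto_sum_nat

end Stmt5Aux

/-- For `0 < t < 1` and `1/2 ≤ r ≤ 1`, the function `z ↦ 2^{tz} ν(z, r)` is
Lebesgue integrable on `ℝ`; in particular `φ(t,r) = ∫ 2^{tz} ν(z,r) dz` is
finite. -/
theorem stmt_5 (t r : ℝ) (ht0 : 0 < t) (ht1 : t < 1)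
    (hr0 : 1/2 ≤ r) (hr1 : r ≤ 1) :
    Integrable (fun z : ℝ => (2:ℝ) ^ (t * z) * nu z r) := by
  have hr0' : (0:ℝ) ≤ r := le_trans (by norm_num) hr0
  set f : ℝ → ℝ := fun z => (2:ℝ) ^ (t * z) * nu z r with hf
  -- measurability
  have hmeas : Measurable f := by
    have h1 : Continuous fun z : ℝ => (2:ℝ) ^ (t * z) := by
      simp_rw [Real.rpow_def_of_pos (by norm_num : (0:ℝ) < 2)]
      exact Real.continuous_exp.comp (continuous_const.mul (continuous_const.mul continuous_id))
    have h2 : Continuous fun z : ℝ => (1 - Real.exp (-(2:ℝ) ^ (-z))) * r := by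
      have : Continuous fun z : ℝ => (2:ℝ) ^ (-z) := by
        simp_rw [Real.rpow_def_of_pos (by norm_num : (0:ℝ) < 2)]
        exact Real.continuous_exp.comp (continuous_const.mul continuous_neg)
      continuity
    exact (h1.measurable).mul
      ((h2.measurable).mul (Stmt5Aux.measurable_tprod hr0' hr1))
  -- pointwise bounds on nu
  have hnu_nonneg : ∀ z : ℝ, 0 ≤ nu z r := by
    intro z
    have hA : 0 ≤ 1 - Real.exp (-(2:ℝ) ^ (-z)) := by
      have h := Real.exp_le_one_iff.mpr
        (neg_nonpos.mpr (Real.rpow_nonneg (by norm_num : (0:ℝ) ≤ 2) (-z)))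
      linarith
    exact mul_nonneg (mul_nonneg hA hr0') (Stmt5Aux.tprod_pos hr0' hr1 z).le
  have hnu_le : ∀ z : ℝ, nu z r ≤ 1 - Real.exp (-(2:ℝ) ^ (-z)) := by
    intro z
    have hA : 0 ≤ 1 - Real.exp (-(2:ℝ) ^ (-z)) := by
      have h := Real.exp_le_one_iff.mpr
        (neg_nonpos.mpr (Real.rpow_nonneg (by norm_num : (0:ℝ) ≤ 2) (-z)))
      linarith
    have hP : (∏' j : ℕ, (1 - (1 - Real.exp (-(2:ℝ) ^ (-z - ((j : ℝ) + 1)))) * r)) ≤ 1 :=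
      Stmt5Aux.tprod_le_one' hr0' hr1 z
    have hP0 : 0 ≤ (∏' j : ℕ, (1 - (1 - Real.exp (-(2:ℝ) ^ (-z - ((j : ℝ) + 1)))) * r)) :=
      (Stmt5Aux.tprod_pos hr0' hr1 z).le
    unfold nu
    nlinarith [mul_le_mul_of_nonneg_left hP (mul_nonneg hA hr0'), mul_nonneg hA hr0']
  have hA_le_one : ∀ z : ℝ, 1 - Real.exp (-(2:ℝ) ^ (-z)) ≤ 1 := by
    intro z; have := Real.exp_pos (-(2:ℝ) ^ (-z)); linarith
  have hA_le_pow : ∀ z : ℝ, 1 - Real.exp (-(2:ℝ) ^ (-z)) ≤ (2:ℝ) ^ (-z) := by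
    intro z
    have := Real.add_one_le_exp (-(2:ℝ) ^ (-z))
    linarith
  have hlog2 : (0:ℝ) < Real.log 2 := Real.log_pos (by norm_num)
  -- integrable on Iic 0
  have hIic : IntegrableOn f (Set.Iic (0:ℝ)) := by
    have hmaj : IntegrableOn (fun z : ℝ => Real.exp (-(t * Real.log 2) * (-z)))
        (Set.Iic (0:ℝ)) := by
      have h := exp_neg_integrableOn_Ioi 0 (mul_pos ht0 hlog2)
      have h2 := (MeasurePreserving.integrableOn_comp_preimage
        (Measure.measurePreserving_neg (volume : Measure ℝ))
        (Homeomorph.neg ℝ).measurableEmbedding).2 h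
      have hpre : (Neg.neg : ℝ → ℝ) ⁻¹' Set.Ioi 0 = Set.Iio 0 := by
        ext x; simp
      rw [hpre] at h2
      have : IntegrableOn (fun z : ℝ => Real.exp (-(t * Real.log 2) * (-z)))
          (Set.Iio (0:ℝ)) := h2
      rwa [integrableOn_Iic_iff_integrableOn_Iio]
    apply hmaj.mono' (hmeas.aestronglyMeasurable.restrict)
    rw [ae_restrict_iff' measurableSet_Iic]
    apply ae_of_all
    intro z hz
    have hfz : 0 ≤ f z := mul_nonneg (Real.rpow_nonneg (by norm_num) _) (hnu_nonneg z)
    rw [Real.norm_eq_abs, abs_of_nonneg hfz]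
    have hb : nu z r ≤ 1 := le_trans (hnu_le z) (hA_le_one z)
    calc f z ≤ (2:ℝ) ^ (t * z) * 1 :=
          mul_le_mul_of_nonneg_left hb (Real.rpow_nonneg (by norm_num) _)
      _ = Real.exp (-(t * Real.log 2) * (-z)) := by
          rw [mul_one, Real.rpow_def_of_pos (by norm_num : (0:ℝ) < 2)]
          ring_nf
  -- integrable on Ioi 0
  have hIoi : IntegrableOn f (Set.Ioi (0:ℝ)) := by
    have hmaj : IntegrableOn (fun z : ℝ => Real.exp (-((1 - t) * Real.log 2) * z))
        (Set.Ioi (0:ℝ)) :=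
      exp_neg_integrableOn_Ioi 0 (mul_pos (by linarith) hlog2)
    apply hmaj.mono' (hmeas.aestronglyMeasurable.restrict)
    rw [ae_restrict_iff' measurableSet_Ioi]
    apply ae_of_all
    intro z hz
    have hfz : 0 ≤ f z := mul_nonneg (Real.rpow_nonneg (by norm_num) _) (hnu_nonneg z)
    rw [Real.norm_eq_abs, abs_of_nonneg hfz]
    have hb : nu z r ≤ (2:ℝ) ^ (-z) := le_trans (hnu_le z) (hA_le_pow z)
    calc f z ≤ (2:ℝ) ^ (t * z) * (2:ℝ) ^ (-z) :=
          mul_le_mul_of_nonneg_left hb (Real.rpow_nonneg (by norm_num) _)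
      _ = Real.exp (-((1 - t) * Real.log 2) * z) := by
          rw [← Real.rpow_add (by norm_num : (0:ℝ) < 2),
            Real.rpow_def_of_pos (by norm_num : (0:ℝ) < 2)]
          ring_nf
  have := hIic.union hIoi
  rwa [Set.Iic_union_Ioi, integrableOn_univ] at this
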